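/- If a simple digraph Γ₀ is obtained from a simple digraph Γ by flipping a single arc (a,b) ∈ E(Γ) (where (b,a) ∉ E(Γ)), then |th(Γ₀) − th(Γ)| ≤ 1. -/

import Mathlib

open Set

/-- One time step of standard zero forcing on a digraph with arc relation `A`:
every blue vertex having a unique white out-neighbor forces it blue. -/
def dstep {V : Type*} (A : V → V → Prop) (S : Set V) : Set V :=
  S ∪ {w | ∃ u ∈ S, A u w ∧ ∀ x, A u x → x ∉ S → x = w}

/-- `B` is a zero forcing set of the digraph with arc relation `A`. -/
def IsZFS {V : Type*} (A : V → V → Prop) (B : Set V) : Prop :=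
  ∃ t, (dstep A)^[t] B = Set.univ

/-- Propagation time of `B` in the digraph with arc relation `A`. -/
noncomputable def dpt {V : Type*} (A : V → V → Prop) (B : Set V) : ℕ :=
  sInf {t | (dstep A)^[t] B = Set.univ}

/-- The throttling number of the digraph with arc relation `A`. -/
noncomputable def dth {V : Type*} (A : V → V → Prop) : ℕ :=
  sInf {k | ∃ B : Set V, IsZFS A B ∧ k = B.ncard + dpt A B}

/-- The digraph obtained by flipping the single arc `(a,b)` to `(b,a)`. -/
def flipArc {V : Type*} (A : V → V → Prop) (a b : V) : V → V → Prop :=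
  fun u v => (A u v ∧ ¬(u = a ∧ v = b)) ∨ (u = b ∧ v = a)

lemma subset_dstep {V : Type*} (A : V → V → Prop) (S : Set V) : S ⊆ dstep A S :=
  Set.subset_union_left

lemma iter_mono {V : Type*} (A : V → V → Prop) (B : Set V) {i j : ℕ} (hij : i ≤ j) :
    (dstep A)^[i] B ⊆ (dstep A)^[j] B := by
  obtain ⟨k, rfl⟩ := Nat.exists_eq_add_of_le hij
  clear hij
  induction k with
  | zero => exact subset_rfl
  | succ k ih =>
    have h1 : i + (k + 1) = (i + k) + 1 := rfl
    rw [h1, Function.iterate_succ_apply']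
    exact Set.Subset.trans ih (subset_dstep A _)

lemma flipArc_flip_flip {V : Type*} (A : V → V → Prop) (a b : V) (hab : A a b) (hba : ¬ A b a)
    (hne : a ≠ b) : flipArc (flipArc A a b) b a = A := by
  funext u v
  apply propext
  constructor
  · rintro (⟨(⟨h, -⟩ | hba'), hnba⟩ | ⟨rfl, rfl⟩)
    · exact h
    · exact absurd hba' hnba
    · exact hab
  · intro h
    by_cases h1 : u = a ∧ v = b
    · exact Or.inr h1
    · refine Or.inl ⟨Or.inl ⟨h, h1⟩, ?_⟩
      rintro ⟨rfl, rfl⟩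
      exact hba h

/-- The key direction: flipping an arc increases throttling by at most one. -/
lemma dth_flip_le {V : Type*} [Fintype V] (A : V → V → Prop)
    (a b : V) (hab : A a b) (hba : ¬ A b a) :
    dth (flipArc A a b) ≤ dth A + 1 := by
  set A' := flipArc A a b with hA'
  -- obtain an optimal pair for A
  have hne : {k | ∃ B : Set V, IsZFS A B ∧ k = B.ncard + dpt A B}.Nonempty :=
    ⟨(Set.univ : Set V).ncard + dpt A Set.univ, Set.univ, ⟨0, rfl⟩, rfl⟩
  obtain ⟨B, hBzfs, heq⟩ := Nat.sInf_mem hne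
  set p := dpt A B with hpdef
  have hp : (dstep A)^[p] B = Set.univ := Nat.sInf_mem hBzfs
  set S : ℕ → Set V := fun i => (dstep A)^[i] B with hS
  -- the key claim: one extra vertex suffices in A'
  have main : ∃ x : V, ∀ i, insert x (S i) ⊆ (dstep A')^[i] (insert x B) := by
    by_cases hcase : ∀ i, b ∈ S i → a ∈ S i
    · -- Case B : use x = b
      refine ⟨b, fun i => ?_⟩
      induction i with
      | zero => exact subset_rfl
      | succ i ih =>
        rw [Function.iterate_succ_apply']
        set T := (dstep A')^[i] (insert b B) with hT
        intro w hw
        by_cases hwT : w ∈ T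
        · exact subset_dstep A' T hwT
        rcases hw with rfl | hw
        · exact absurd (ih (mem_insert _ _)) hwT
        have hwS : w ∉ S i := fun h => hwT (ih (mem_insert_of_mem _ h))
        rw [show S (i+1) = dstep A (S i) from Function.iterate_succ_apply' _ _ _] at hw
        simp only [dstep, Set.mem_union, Set.mem_setOf_eq] at hw
        rcases hw with hw | ⟨u, huS, huw, huniq⟩
        · exact absurd (ih (mem_insert_of_mem _ hw)) hwT
        have hwb : w ≠ b := fun h => hwT (h ▸ ih (mem_insert _ _))
        refine Or.inr ⟨u, ih (mem_insert_of_mem _ huS), Or.inl ⟨huw, fun h => hwb h.2⟩, ?_⟩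
        rintro x (⟨hAux, -⟩ | ⟨rfl, rfl⟩) hxT
        · exact huniq x hAux (fun hxS => hxT (ih (mem_insert_of_mem _ hxS)))
        · exact absurd (ih (mem_insert_of_mem _ (hcase i huS))) hxT
    · -- Case A : use x = a
      push_neg at hcase
      obtain ⟨i₀, hbi₀, hai₀⟩ := hcase
      refine ⟨a, fun i => ?_⟩
      induction i with
      | zero => exact subset_rfl
      | succ i ih =>
        rw [Function.iterate_succ_apply']
        set T := (dstep A')^[i] (insert a B) with hT
        intro w hw
        by_cases hwT : w ∈ T
        · exact subset_dstep A' T hwT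
        rcases hw with rfl | hw
        · exact absurd (ih (mem_insert _ _)) hwT
        have hwS : w ∉ S i := fun h => hwT (ih (mem_insert_of_mem _ h))
        rw [show S (i+1) = dstep A (S i) from Function.iterate_succ_apply' _ _ _] at hw
        simp only [dstep, Set.mem_union, Set.mem_setOf_eq] at hw
        rcases hw with hw | ⟨u, huS, huw, huniq⟩
        · exact absurd (ih (mem_insert_of_mem _ hw)) hwT
        refine Or.inr ⟨u, ih (mem_insert_of_mem _ huS), Or.inl ⟨huw, ?_⟩, ?_⟩
        · rintro ⟨rfl, rfl⟩
          -- u = a ∈ S i, w = b ∉ S i, but b ∈ S i₀ and a ∉ S i₀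
          have hle : i ≤ i₀ := by
            by_contra h
            exact hwS (iter_mono A B (le_of_not_ge h) hbi₀)
          exact hai₀ (iter_mono A B hle huS)
        · rintro x (⟨hAux, -⟩ | ⟨rfl, rfl⟩) hxT
          · exact huniq x hAux (fun hxS => hxT (ih (mem_insert_of_mem _ hxS)))
          · exact absurd (ih (mem_insert _ _)) hxT
  obtain ⟨x, hx⟩ := main
  have hTp : (dstep A')^[p] (insert x B) = Set.univ := by
    apply Set.eq_univ_of_univ_subset
    intro v hv
    exact hx p (by rw [show S p = Set.univ from hp]; exact mem_insert_of_mem _ (mem_univ v))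
  have hzfs' : IsZFS A' (insert x B) := ⟨p, hTp⟩
  have hdpt : dpt A' (insert x B) ≤ p := Nat.sInf_le hTp
  have hdth : dth A' ≤ (insert x B).ncard + dpt A' (insert x B) :=
    Nat.sInf_le ⟨insert x B, hzfs', rfl⟩
  calc dth A' ≤ (insert x B).ncard + dpt A' (insert x B) := hdth
    _ ≤ (B.ncard + 1) + p := add_le_add (Set.ncard_insert_le x B) hdpt
    _ = (B.ncard + p) + 1 := by ring
    _ = dth A + 1 := by rw [show dth A = B.ncard + p from heq]

/-- Flipping a single arc changes the throttling number by at most one. -/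
theorem stmt1 {V : Type*} [Fintype V] (A : V → V → Prop) (hirr : Irreflexive A)
    (a b : V) (hab : A a b) (hba : ¬ A b a) :
    dth (flipArc A a b) ≤ dth A + 1 ∧ dth A ≤ dth (flipArc A a b) + 1 := by
  have hne : a ≠ b := fun h => hirr b (h ▸ hab)
  constructor
  · exact dth_flip_le A a b hab hba
  · have hab' : flipArc A a b b a := Or.inr ⟨rfl, rfl⟩
    have hba' : ¬ flipArc A a b a b := by
      rintro (⟨-, h⟩ | ⟨h1, -⟩)
      · exact h ⟨rfl, rfl⟩
      · exact hne h1
    have := dth_flip_le (flipArc A a b) b a hab' hba'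
    rwa [flipArc_flip_flip A a b hab hba hne] at this
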